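/- Let (A,↘,↗,↖,↙) be a quadri-algebra over a field of characteristic zero. Then the operations x▷y = x↘y − y↖x and x◁y = x↗y − y↙x define an L-dendriform algebra structure on A. -/
import Mathlib


/-- An L-dendriform algebra structure. -/
def IsLDendriform {K A : Type*} [Field K] [AddCommGroup A] [Module K A]
    (tr tl : A →ₗ[K] A →ₗ[K] A) : Prop :=
  (∀ x y z : A, tr x (tr y z) =
      tr (tr x y) z + tr (tl x y) z + tr y (tr x z) - tr (tl y x) z - tr (tr y x) z) ∧
  (∀ x y z : A, tr x (tl y z) =
      tl (tr x y) z + tl y (tr x z) + tl y (tl x z) - tl (tl y x) z)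

/-- A quadri-algebra structure: four bilinear operations `se` (`↘`), `ne` (`↗`),
`nw` (`↖`), `sw` (`↙`) satisfying the nine quadri-algebra axioms, where
`x≻y = x↗y + x↘y`, `x≺y = x↖y + x↙y`, `x∨y = x↘y + x↙y`, `x∧y = x↗y + x↖y` and
`x∗y = x↘y + x↗y + x↖y + x↙y`. -/
def IsQuadri {K A : Type*} [Field K] [AddCommGroup A] [Module K A]
    (se ne nw sw : A →ₗ[K] A →ₗ[K] A) : Prop :=
  (∀ x y z : A, nw (nw x y) z = nw x (se y z + ne y z + nw y z + sw y z)) ∧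
  (∀ x y z : A, nw (ne x y) z = ne x (nw y z + sw y z)) ∧
  (∀ x y z : A, ne (ne x y + nw x y) z = ne x (ne y z + se y z)) ∧
  (∀ x y z : A, nw (sw x y) z = sw x (ne y z + nw y z)) ∧
  (∀ x y z : A, nw (se x y) z = se x (nw y z)) ∧
  (∀ x y z : A, ne (se x y + sw x y) z = se x (ne y z)) ∧
  (∀ x y z : A, sw (nw x y + sw x y) z = sw x (se y z + sw y z)) ∧
  (∀ x y z : A, sw (ne x y + se x y) z = se x (sw y z)) ∧
  (∀ x y z : A, se (se x y + ne x y + nw x y + sw x y) z = se x (se y z))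

/-- For a quadri-algebra `(A,↘,↗,↖,↙)` over a field of characteristic
zero, the operations `x▷y = x↘y − y↖x` and `x◁y = x↗y − y↙x` (i.e. `se - nw.flip`
and `ne - sw.flip`) define an L-dendriform algebra structure on `A`. -/
theorem LDendriform_of_quadri {K A : Type*} [Field K] [CharZero K]
    [AddCommGroup A] [Module K A]
    (se ne nw sw : A →ₗ[K] A →ₗ[K] A) (h : IsQuadri se ne nw sw) :
    IsLDendriform (se - nw.flip) (ne - sw.flip) := by
  obtain ⟨h1, h2, h3, h4, h5, h6, h7, h8, h9⟩ := h
  simp only [map_add, LinearMap.add_apply] at h1 h2 h3 h4 h5 h6 h7 h8 h9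
  constructor <;> intro x y z <;>
    simp only [LinearMap.sub_apply, LinearMap.flip_apply, map_sub, LinearMap.sub_apply]
  · linear_combination (norm := module) -h9 x y z + h9 y x z + h5 x z y - h5 y z x
      + h1 z y x - h1 z x y
  · linear_combination (norm := module) -h6 x y z + h8 x z y - h2 y z x + h4 z y x
      + h3 y x z - h7 z x y
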